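/- arXiv:math/0607491 — 2 statements merged into one kernel-verified Lean document; each statement's English description precedes it below -/
import Mathlib

section
/- The alternating harmonic sum A_n = 1 - 1/2 + 1/3 - ... + (-1)^{n-1}/n is not an integer for any n ≥ 2. -/
private def A (n : ℕ) : ℚ := ∑ i ∈ Finset.Icc 1 n, (-1 : ℚ) ^ (i - 1) / i

private lemma A_succ (n : ℕ) : A (n + 1) = A n + (-1 : ℚ) ^ n / (n + 1) := by
  unfold A
  rw [Finset.sum_Icc_succ_top (by omega : 1 ≤ n + 1)]
  push_cast
  simp

private lemma A_bounds : ∀ n, 2 ≤ n →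
    (1/2 ≤ A n ∧ A n ≤ 5/6) ∧ (1/2 ≤ A (n+1) ∧ A (n+1) ≤ 5/6) := by
  intro n hn
  induction n, hn using Nat.le_induction with
  | base =>
      have h1 : A 1 = 1 := by unfold A; simp
      have h2 : A 2 = 1/2 := by rw [A_succ 1, h1]; norm_num
      have h3 : A (2+1) = 5/6 := by rw [A_succ 2, h2]; norm_num
      rw [h2, h3]; norm_num
  | succ n hn ih =>
      obtain ⟨⟨h1, h2⟩, h3, h4⟩ := ih
      have e1 := A_succ (n+1)
      have e0 := A_succ n
      have hp1 : (0:ℚ) < (n:ℚ) + 1 := by positivity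
      have hp2 : (0:ℚ) < (n:ℚ) + 2 := by positivity
      have hle : (1:ℚ)/((n:ℚ)+2) ≤ 1/((n:ℚ)+1) :=
        one_div_le_one_div_of_le hp1 (by linarith)
      have hq1 : (0:ℚ) < 1/((n:ℚ)+1) := by positivity
      have hq2 : (0:ℚ) < 1/((n:ℚ)+2) := by positivity
      refine ⟨⟨h3, h4⟩, ?_⟩
      rcases Nat.even_or_odd n with he | ho
      · have hs : ((-1:ℚ))^(n+1) = -1 := by
          rw [pow_succ, he.neg_one_pow]; ring
        have hA2 : A (n+1+1) = A n + 1/((n:ℚ)+1) - 1/((n:ℚ)+2) := by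
          rw [e1, e0, he.neg_one_pow, hs]; push_cast; ring
        have hA1 : A (n+1) = A n + 1/((n:ℚ)+1) := by
          rw [e0, he.neg_one_pow]
        constructor <;> linarith
      · have hs : ((-1:ℚ))^(n+1) = 1 := by
          rw [pow_succ, ho.neg_one_pow]; ring
        have hA2 : A (n+1+1) = A n - 1/((n:ℚ)+1) + 1/((n:ℚ)+2) := by
          rw [e1, e0, ho.neg_one_pow, hs]; push_cast; ring
        have hA1 : A (n+1) = A n - 1/((n:ℚ)+1) := by
          rw [e0, ho.neg_one_pow]; ring
        constructor <;> linarith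

theorem alternating_harmonic_not_integer (n : ℕ) (hn : 2 ≤ n) :
    ¬ ∃ z : ℤ, (∑ i ∈ Finset.Icc 1 n, (-1 : ℚ) ^ (i - 1) / i) = z := by
  rintro ⟨z, hz⟩
  obtain ⟨⟨h1, h2⟩, -⟩ := A_bounds n hn
  have hA : A n = (z : ℚ) := hz
  rw [hA] at h1 h2
  have hz0 : (0:ℤ) < z := by exact_mod_cast lt_of_lt_of_le (by norm_num : (0:ℚ) < 1/2) h1
  have hz1 : (z:ℤ) < 1 := by exact_mod_cast lt_of_le_of_lt h2 (by norm_num : (5:ℚ)/6 < 1)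
  omega
end

section
/- Let n be even with p = (3n+2)/2 prime and n ≥ 4. Writing A_n = a/b in lowest terms with a, b coprime, p divides the numerator a. -/
lemma alt_sum (m : ℕ) :
    ∑ i ∈ Finset.Icc 1 (2*m), (-1:ℚ)^(i-1)/i = ∑ i ∈ Finset.Ioc m (2*m), (1:ℚ)/i := by
  induction m with
  | zero => simp
  | succ k ih =>
    have h1 : 2*(k+1) = (2*k+1)+1 := by ring
    rw [h1, Finset.sum_Icc_succ_top (by omega), Finset.sum_Icc_succ_top (by omega), ih]
    have h2 : ∑ i ∈ Finset.Ioc k (2*k), (1:ℚ)/i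
        + ∑ i ∈ Finset.Ioc (2*k) ((2*k+1)+1), (1:ℚ)/i
        = ∑ i ∈ Finset.Ioc k ((2*k+1)+1), (1:ℚ)/i :=
      Finset.sum_Ioc_consecutive _ (by omega) (by omega)
    have h3 : ∑ i ∈ Finset.Ioc k (k+1), (1:ℚ)/i
        + ∑ i ∈ Finset.Ioc (k+1) ((2*k+1)+1), (1:ℚ)/i
        = ∑ i ∈ Finset.Ioc k ((2*k+1)+1), (1:ℚ)/i :=
      Finset.sum_Ioc_consecutive _ (by omega) (by omega)
    have e1 : Finset.Ioc k (k+1) = {k+1} := by ext x; simp only [Finset.mem_Ioc, Finset.mem_singleton, Finset.mem_insert]; omega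
    have e2 : Finset.Ioc (2*k) ((2*k+1)+1) = {2*k+1, 2*k+2} := by ext x; simp only [Finset.mem_Ioc, Finset.mem_singleton, Finset.mem_insert]; omega
    rw [e1, Finset.sum_singleton] at h3
    rw [e2, Finset.sum_insert (by simp), Finset.sum_singleton] at h2
    have p1 : ((-1:ℚ))^(2*k+1-1) = 1 := by
      have : 2*k+1-1 = 2*k := by omega
      rw [this]; exact Even.neg_one_pow ⟨k, by ring⟩
    have p2 : ((-1:ℚ))^((2*k+1)+1-1) = -1 := by
      have : (2*k+1)+1-1 = 2*k+1 := by omega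
      rw [this]; exact Odd.neg_one_pow ⟨k, by ring⟩
    rw [p1, p2]
    have nz1 : ((2*k+1 : ℕ) : ℚ) ≠ 0 := by positivity
    have nz2 : (((2*k+1)+1 : ℕ) : ℚ) ≠ 0 := by positivity
    have nz3 : ((k+1 : ℕ) : ℚ) ≠ 0 := by positivity
    have key : (1:ℚ)/((2*k+1 : ℕ):ℚ) + (-1)/(((2*k+1)+1 : ℕ):ℚ)
        = 1/((2*k+1 : ℕ):ℚ) + 1/((2*k+2 : ℕ):ℚ) - 1/((k+1 : ℕ):ℚ) := by
      push_cast
      field_simp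
      ring
    push_cast at key h2 h3 ⊢
    linarith [h2, h3, key]

lemma key_lemma (m : ℕ) (hm : 2 ≤ m) (hp : Nat.Prime (3*m+1)) :
    ((3*m+1 : ℕ) : ℤ) ∣ (∑ i ∈ Finset.Icc 1 (2*m), (-1:ℚ)^(i-1)/i).num := by
  haveI : Fact (Nat.Prime (3*m+1)) := ⟨hp⟩
  rw [alt_sum]
  set A : ℚ := ∑ i ∈ Finset.Ioc m (2*m), (1:ℚ)/i with hA
  -- reindex
  have hre : A = ∑ i ∈ Finset.Ioc m (2*m), (1:ℚ)/((3*m+1 - i : ℕ) : ℚ) := by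
    rw [hA]
    apply Finset.sum_nbij' (i := fun i => 3*m+1 - i) (j := fun i => 3*m+1 - i)
    · intro a ha; simp only [Finset.mem_Ioc] at *; omega
    · intro a ha; simp only [Finset.mem_Ioc] at *; omega
    · intro a ha; simp only [Finset.mem_Ioc] at ha; omega
    · intro a ha; simp only [Finset.mem_Ioc] at ha; omega
    · intro a ha; simp only [Finset.mem_Ioc] at ha
      have : 3*m+1 - (3*m+1 - a) = a := by omega
      rw [this]
  have h2A : 2 * A = ((3*m+1 : ℕ) : ℚ)
      * ∑ i ∈ Finset.Ioc m (2*m), (1:ℚ)/(i * (3*m+1 - i : ℕ)) := by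
    have h0 : 2 * A = A + A := by ring
    rw [h0]
    nth_rewrite 2 [hre]
    rw [hA, ← Finset.sum_add_distrib, Finset.mul_sum]
    apply Finset.sum_congr rfl
    intro i hi
    simp only [Finset.mem_Ioc] at hi
    have hi0 : ((i : ℚ)) ≠ 0 := Nat.cast_ne_zero.mpr (by omega)
    have hpi : ((3*m+1 - i : ℕ) : ℚ) ≠ 0 := Nat.cast_ne_zero.mpr (by omega)
    have hcast : ((3*m+1 - i : ℕ) : ℚ) = ((3*m+1 : ℕ) : ℚ) - i := by
      have h : i ≤ 3*m+1 := by omega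
      push_cast [h]
      ring
    field_simp
    rw [hcast]
    push_cast
    ring
  -- norm bound on the sum S
  set S : ℚ := ∑ i ∈ Finset.Ioc m (2*m), (1:ℚ)/(i * (3*m+1 - i : ℕ)) with hS
  have hSle : padicNorm (3*m+1) S ≤ 1 := by
    apply padicNorm.sum_le
    · exact ⟨2*m, by simp only [Finset.mem_Ioc]; omega⟩
    · intro i hi
      simp only [Finset.mem_Ioc] at hi
      have h1 : ((i : ℚ) * ((3*m+1 - i : ℕ) : ℚ)) = ((i * (3*m+1 - i) : ℕ) : ℚ) := by
        push_cast; ring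
      rw [h1, one_div, ← one_div, padicNorm.div, padicNorm.one]
      have h2 : padicNorm (3*m+1) ((i * (3*m+1 - i) : ℕ) : ℚ) = 1 := by
        rw [padicNorm.nat_eq_one_iff]
        intro hdvd
        rcases (Nat.Prime.dvd_mul hp).mp hdvd with h | h
        · have := Nat.le_of_dvd (by omega) h; omega
        · have := Nat.le_of_dvd (by omega) h; omega
      rw [h2]; norm_num
  have hnorm2 : padicNorm (3*m+1) (2 : ℚ) = 1 := by
    have h : ((2:ℕ) : ℚ) = (2:ℚ) := by norm_num
    rw [← h, padicNorm.nat_eq_one_iff]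
    intro hdvd
    have := Nat.le_of_dvd (by norm_num) hdvd
    omega
  have hnormA : padicNorm (3*m+1) A ≤ (((3*m+1 : ℕ)) : ℚ)⁻¹ := by
    have e : padicNorm (3*m+1) (2 * A) = padicNorm (3*m+1) A := by
      rw [padicNorm.mul, hnorm2, one_mul]
    have e2 : padicNorm (3*m+1) (2 * A) ≤ (((3*m+1 : ℕ)) : ℚ)⁻¹ := by
      rw [h2A, padicNorm.mul, padicNorm.padicNorm_p_of_prime]
      calc ((((3*m+1:ℕ)):ℚ))⁻¹ * padicNorm (3*m+1) S ≤ ((((3*m+1:ℕ)):ℚ))⁻¹ * 1 := by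
            apply mul_le_mul_of_nonneg_left hSle
            positivity
        _ = ((((3*m+1:ℕ)):ℚ))⁻¹ := by ring
    linarith [e, e2]
  -- conclude p ∣ num
  have hden : ((A.den : ℚ)) ≠ 0 := Nat.cast_ne_zero.mpr (Rat.den_ne_zero A)
  have hid : (A.num : ℚ) = A * (A.den : ℚ) := (div_eq_iff hden).mp (Rat.num_div_den A)
  have hnormnum : padicNorm (3*m+1) (A.num : ℚ) ≤ (((3*m+1 : ℕ)) : ℚ)⁻¹ := by
    rw [hid, padicNorm.mul]
    calc padicNorm (3*m+1) A * padicNorm (3*m+1) ((A.den : ℕ) : ℚ)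
        ≤ (((3*m+1:ℕ)):ℚ)⁻¹ * 1 :=
          mul_le_mul hnormA (padicNorm.of_nat _) (padicNorm.nonneg _) (by positivity)
      _ = (((3*m+1:ℕ)):ℚ)⁻¹ := by ring
  have hdvd : (((3*m+1) ^ 1 : ℕ) : ℤ) ∣ A.num := by
    rw [padicNorm.dvd_iff_norm_le]
    simpa using hnormnum
  simpa using hdvd

theorem prime_dvd_num_even (n : ℕ) (hn : 4 ≤ n) (heven : Even n)
    (hp : Nat.Prime ((3 * n + 2) / 2)) :
    ((3 * n + 2 : ℤ) / 2) ∣ (∑ i ∈ Finset.Icc 1 n, (-1 : ℚ) ^ (i - 1) / i).num := by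
  obtain ⟨m, hm⟩ := heven
  have hn2 : n = 2 * m := by omega
  have hq : (3 * n + 2) / 2 = 3 * m + 1 := by omega
  have hq2 : ((3 * n + 2 : ℤ)) / 2 = ((3 * m + 1 : ℕ) : ℤ) := by
    push_cast
    omega
  rw [hq2, hn2]
  exact key_lemma m (by omega) (by rwa [hq] at hp)
end
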